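/- Let V be a finite-dimensional real inner product space, let A : V → V be a symmetric linear map (⟪A v, w⟫ = ⟪v, A w⟫ for all v, w ∈ V) with ⟪A v, v⟫ ≥ 0 for all v ∈ V, and let f : [0,∞) → V be continuous and bounded. Then for every u₀ ∈ V there exists a unique continuously differentiable function u : [0,∞) → V with u(0) = u₀ satisfying u'(t) + (1 + ⟪A u(t), u(t)⟫) · A u(t) = f(t) for all t ≥ 0. -/

import Mathlib

open Set Metric NNReal

noncomputable section KirchhoffAux

variable {V : Type*} [NormedAddCommGroup V] [InnerProductSpace ℝ V]

local notation "⟪" x ", " y "⟫" => @inner ℝ _ _ x y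

/-- The Kirchhoff nonlinearity. -/
def kirchhoffNL (B : V →L[ℝ] V) : V → V := fun x => (1 + ⟪B x, x⟫) • B x

/-- Radial projection onto the closed ball of radius `R`. -/
def radialProj (R : ℝ) : V → V := fun x => if ‖x‖ ≤ R then x else (R / ‖x‖) • x

lemma radialProj_eq {R : ℝ} {x : V} (hx : ‖x‖ ≤ R) : radialProj R x = x := if_pos hx

lemma radialProj_norm_le {R : ℝ} (hR : 0 ≤ R) (x : V) : ‖radialProj R x‖ ≤ R := by
  unfold radialProj
  split_ifs with h
  · exact h
  · push_neg at h
    have hx : 0 < ‖x‖ := lt_of_le_of_lt hR h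
    rw [norm_smul, Real.norm_eq_abs, abs_of_nonneg (div_nonneg hR hx.le),
      div_mul_cancel₀ _ hx.ne']

lemma radialProj_lipschitz {R : ℝ} (hR : 0 ≤ R) : LipschitzWith 2 (radialProj (V := V) R) := by
  apply LipschitzWith.of_dist_le_mul
  have key : ∀ x y : V, ‖y‖ ≤ ‖x‖ → ‖radialProj R x - radialProj R y‖ ≤ 2 * ‖x - y‖ := by
    intro x y hyx
    by_cases hx : ‖x‖ ≤ R
    · rw [radialProj_eq hx, radialProj_eq (hyx.trans hx)]
      linarith [norm_nonneg (x - y)]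
    · push_neg at hx
      have hx0 : 0 < ‖x‖ := lt_of_le_of_lt hR hx
      have hxy : ‖x‖ - ‖y‖ ≤ ‖x - y‖ := by
        have := norm_sub_norm_le x y; linarith [abs_le.1 (abs_norm_sub_norm_le x y)]
      have hRx : R / ‖x‖ ≤ 1 := by rw [div_le_one hx0]; exact hx.le
      have hRx0 : 0 ≤ R / ‖x‖ := div_nonneg hR hx0.le
      rw [show radialProj R x = (R / ‖x‖) • x from if_neg (not_le.2 hx)]
      by_cases hy : ‖y‖ ≤ R
      · rw [radialProj_eq hy]
        have split : (R / ‖x‖) • x - y = (R / ‖x‖) • (x - y) + ((R / ‖x‖ - 1) • y) := by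
          rw [smul_sub, sub_smul, one_smul]; abel
        have h1 : ‖(R / ‖x‖) • (x - y)‖ ≤ ‖x - y‖ := by
          rw [norm_smul, Real.norm_eq_abs, abs_of_nonneg hRx0]
          nlinarith [norm_nonneg (x - y)]
        have h2 : ‖(R / ‖x‖ - 1) • y‖ ≤ ‖x - y‖ := by
          rw [norm_smul, Real.norm_eq_abs, abs_of_nonpos (by linarith)]
          have : (1 - R / ‖x‖) * ‖y‖ ≤ (1 - R / ‖x‖) * ‖x‖ := by
            nlinarith
          have hxR : (1 - R / ‖x‖) * ‖x‖ = ‖x‖ - R := by field_simp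
          nlinarith
        calc ‖(R / ‖x‖) • x - y‖ ≤ ‖(R / ‖x‖) • (x - y)‖ + ‖(R / ‖x‖ - 1) • y‖ := by
              rw [split]; exact norm_add_le _ _
          _ ≤ 2 * ‖x - y‖ := by linarith
      · push_neg at hy
        have hy0 : 0 < ‖y‖ := lt_of_le_of_lt hR hy
        have hRy : R / ‖y‖ ≤ 1 := by rw [div_le_one hy0]; exact hy.le
        have hRy0 : 0 ≤ R / ‖y‖ := div_nonneg hR hy0.le
        rw [show radialProj R y = (R / ‖y‖) • y from if_neg (not_le.2 hy)]
        have split : (R / ‖x‖) • x - (R / ‖y‖) • y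
            = (R / ‖y‖) • (x - y) + ((R / ‖x‖ - R / ‖y‖) • x) := by
          rw [smul_sub, sub_smul]; abel
        have h1 : ‖(R / ‖y‖) • (x - y)‖ ≤ ‖x - y‖ := by
          rw [norm_smul, Real.norm_eq_abs, abs_of_nonneg hRy0]
          nlinarith [norm_nonneg (x - y)]
        have h2 : ‖(R / ‖x‖ - R / ‖y‖) • x‖ ≤ ‖x - y‖ := by
          rw [norm_smul, Real.norm_eq_abs]
          have hmono : R / ‖x‖ ≤ R / ‖y‖ := by gcongr
          have habs : |R / ‖x‖ - R / ‖y‖| = R / ‖y‖ - R / ‖x‖ := by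
            rw [abs_sub_comm, abs_of_nonneg (sub_nonneg.2 hmono)]
          rw [habs]
          have key2 : (R / ‖y‖ - R / ‖x‖) * ‖x‖ = (R / ‖y‖) * (‖x‖ - ‖y‖) := by
            field_simp
          rw [key2]
          nlinarith [sub_nonneg.2 hyx]
        calc ‖(R / ‖x‖) • x - (R / ‖y‖) • y‖
            ≤ ‖(R / ‖y‖) • (x - y)‖ + ‖(R / ‖x‖ - R / ‖y‖) • x‖ := by
              rw [split]; exact norm_add_le _ _
          _ ≤ 2 * ‖x - y‖ := by linarith
  intro x y
  rcases le_total ‖y‖ ‖x‖ with h | h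
  · rw [dist_eq_norm, dist_eq_norm]; exact le_trans (key x y h) (by norm_num)
  · rw [dist_eq_norm, norm_sub_rev, dist_eq_norm, norm_sub_rev x y]
    exact le_trans (key y x h) (by norm_num)

lemma kirchhoffNL_lipschitzOn (B : V →L[ℝ] V) {R : ℝ} (hR : 0 ≤ R) :
    LipschitzOnWith (Real.toNNReal ((1 + ‖B‖ * R ^ 2) * ‖B‖ + 2 * ‖B‖ ^ 2 * R ^ 2))
      (kirchhoffNL B) (closedBall 0 R) := by
  apply LipschitzOnWith.of_dist_le_mul
  intro x hx y hy
  rw [mem_closedBall_zero_iff] at hx hy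
  rw [dist_eq_norm, dist_eq_norm]
  have hB := norm_nonneg B
  have hBx : ‖B x‖ ≤ ‖B‖ * R := le_trans (B.le_opNorm x) (by nlinarith)
  have hBy : ‖B y‖ ≤ ‖B‖ * R := le_trans (B.le_opNorm y) (by nlinarith)
  have hBxy : ‖B x - B y‖ ≤ ‖B‖ * ‖x - y‖ := by
    rw [← map_sub]; exact B.le_opNorm _
  have hqx : |⟪B x, x⟫| ≤ ‖B‖ * R ^ 2 := by
    refine le_trans (abs_real_inner_le_norm _ _) ?_
    nlinarith [norm_nonneg (B x), norm_nonneg x]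
  have hq1 : |⟪B x, x - y⟫| ≤ ‖B‖ * R * ‖x - y‖ := by
    refine le_trans (abs_real_inner_le_norm _ _) ?_
    nlinarith [norm_nonneg (x - y)]
  have hq2 : |⟪B (x - y), y⟫| ≤ ‖B‖ * ‖x - y‖ * R := by
    refine le_trans (abs_real_inner_le_norm _ _) ?_
    have := B.le_opNorm (x - y)
    nlinarith [norm_nonneg (x - y), norm_nonneg (B (x - y)), norm_nonneg y]
  have hqsub : ⟪B x, x⟫ - ⟪B y, y⟫ = ⟪B x, x - y⟫ + ⟪B (x - y), y⟫ := by
    simp only [inner_sub_right, map_sub, inner_sub_left]; ring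
  have hsplit : kirchhoffNL B x - kirchhoffNL B y
      = (1 + ⟪B x, x⟫) • (B x - B y) + (⟪B x, x⟫ - ⟪B y, y⟫) • B y := by
    unfold kirchhoffNL
    module
  have habsq : |⟪B x, x⟫ - ⟪B y, y⟫| ≤ 2 * (‖B‖ * R * ‖x - y‖) := by
    rw [hqsub]
    refine le_trans (abs_add_le _ _) ?_
    nlinarith
  have h1 : ‖(1 + ⟪B x, x⟫) • (B x - B y)‖ ≤ (1 + ‖B‖ * R ^ 2) * (‖B‖ * ‖x - y‖) := by
    rw [norm_smul, Real.norm_eq_abs]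
    have : |1 + ⟪B x, x⟫| ≤ 1 + ‖B‖ * R ^ 2 := by
      refine le_trans (abs_add_le _ _) ?_
      simp only [abs_one]
      linarith
    nlinarith [norm_nonneg (B x - B y), abs_nonneg (1 + ⟪B x, x⟫)]
  have h2 : ‖(⟪B x, x⟫ - ⟪B y, y⟫) • B y‖ ≤ 2 * (‖B‖ * R * ‖x - y‖) * (‖B‖ * R) := by
    rw [norm_smul, Real.norm_eq_abs]
    nlinarith [norm_nonneg (B y), abs_nonneg (⟪B x, x⟫ - ⟪B y, y⟫),
      mul_le_mul habsq hBy (norm_nonneg (B y)) (by positivity)]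
  rw [Real.coe_toNNReal _ (by positivity)]
  calc ‖kirchhoffNL B x - kirchhoffNL B y‖
      ≤ ‖(1 + ⟪B x, x⟫) • (B x - B y)‖ + ‖(⟪B x, x⟫ - ⟪B y, y⟫) • B y‖ := by
        rw [hsplit]; exact norm_add_le _ _
    _ ≤ ((1 + ‖B‖ * R ^ 2) * ‖B‖ + 2 * ‖B‖ ^ 2 * R ^ 2) * ‖x - y‖ := by nlinarith

lemma kirchhoffNL_norm_le (B : V →L[ℝ] V) {R : ℝ} (hR : 0 ≤ R) {x : V} (hx : ‖x‖ ≤ R) :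
    ‖kirchhoffNL B x‖ ≤ (1 + ‖B‖ * R ^ 2) * (‖B‖ * R) := by
  unfold kirchhoffNL
  rw [norm_smul, Real.norm_eq_abs]
  have hB := norm_nonneg B
  have hBx : ‖B x‖ ≤ ‖B‖ * R := le_trans (B.le_opNorm x) (by nlinarith)
  have hqx : |⟪B x, x⟫| ≤ ‖B‖ * R ^ 2 := by
    refine le_trans (abs_real_inner_le_norm _ _) ?_
    nlinarith [norm_nonneg (B x), norm_nonneg x]
  have : |1 + ⟪B x, x⟫| ≤ 1 + ‖B‖ * R ^ 2 := by
    refine le_trans (abs_add_le _ _) ?_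
    simp only [abs_one]; linarith
  nlinarith [abs_nonneg (1 + ⟪B x, x⟫), norm_nonneg (B x)]

lemma kirchhoffNL_inner_nonneg (B : V →L[ℝ] V) (hpos : ∀ v : V, 0 ≤ ⟪B v, v⟫) (x : V) :
    0 ≤ ⟪kirchhoffNL B x, x⟫ := by
  unfold kirchhoffNL
  rw [real_inner_smul_left]
  have := hpos x
  nlinarith

lemma kirchhoffNL_radialProj_inner_nonneg (B : V →L[ℝ] V) (hpos : ∀ v : V, 0 ≤ ⟪B v, v⟫)
    {R : ℝ} (hR : 0 ≤ R) (x : V) : 0 ≤ ⟪kirchhoffNL B (radialProj R x), x⟫ := by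
  unfold radialProj
  split_ifs with h
  · exact kirchhoffNL_inner_nonneg B hpos x
  · push_neg at h
    have hx0 : 0 < ‖x‖ := lt_of_le_of_lt hR h
    have hc : 0 ≤ R / ‖x‖ := div_nonneg hR hx0.le
    unfold kirchhoffNL
    simp only [map_smul, real_inner_smul_left, real_inner_smul_right]
    have hcq : 0 ≤ R / ‖x‖ * inner ℝ (B x) x := mul_nonneg hc (hpos x)
    nlinarith [hcq, mul_nonneg hc hcq]

lemma gronwallBound_mono_right {δ K ε : ℝ} (hδ : 0 ≤ δ) (hK : 0 < K) (hε : 0 ≤ ε)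
    {x y : ℝ} (hxy : x ≤ y) : gronwallBound δ K ε x ≤ gronwallBound δ K ε y := by
  rw [gronwallBound_of_K_ne_0 hK.ne']
  dsimp only
  have h1 : Real.exp (K * x) ≤ Real.exp (K * y) := Real.exp_le_exp.2 (by nlinarith)
  have h2 : 0 ≤ ε / K := div_nonneg hε hK.le
  nlinarith

lemma gronwallBound_nonneg {δ K ε x : ℝ} (hδ : 0 ≤ δ) (hε : 0 ≤ ε) (hx : 0 ≤ x) :
    0 ≤ gronwallBound δ K ε x := by
  by_cases hK : K = 0
  · subst hK; rw [gronwallBound_K0]; dsimp; nlinarith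
  · rw [gronwallBound_of_K_ne_0 hK]
    rcases lt_or_gt_of_ne hK with h | h
    · have h1 : Real.exp (K * x) ≤ 1 := Real.exp_le_one_iff.2 (by nlinarith)
      have h2 : 0 < Real.exp (K * x) := Real.exp_pos _
      have h3 : ε / K ≤ 0 := div_nonpos_of_nonneg_of_nonpos hε h.le
      nlinarith
    · have h1 : 1 ≤ Real.exp (K * x) := Real.one_le_exp_iff.2 (by positivity)
      have h3 : 0 ≤ ε / K := div_nonneg hε h.le
      nlinarith

/-- The a priori bound: if `⟪u'(t), u(t)⟫ ≤ Cf ‖u t‖` then `‖u t‖²` satisfies a Grönwall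
bound. -/
lemma apriori_bound {u g : ℝ → V} {T Cf : ℝ} (hCf : 0 ≤ Cf)
    (hu : ContinuousOn u (Icc 0 T))
    (hu' : ∀ t ∈ Ico (0 : ℝ) T, HasDerivWithinAt u (g t) (Ici t) t)
    (hg : ∀ t ∈ Ico (0 : ℝ) T, ⟪g t, u t⟫ ≤ Cf * ‖u t‖) :
    ∀ t ∈ Icc (0 : ℝ) T, ‖u t‖ ^ 2 ≤ gronwallBound (‖u 0‖ ^ 2) (Cf + 1) (Cf + 1) t := by
  have hfun : ∀ t, ⟪u t, u t⟫ = ‖u t‖ ^ 2 := fun t => real_inner_self_eq_norm_sq _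
  have key := le_gronwallBound_of_liminf_deriv_right_le
    (f := fun t => ⟪u t, u t⟫) (f' := fun t => ⟪u t, g t⟫ + ⟪g t, u t⟫)
    (δ := ‖u 0‖ ^ 2) (K := Cf + 1) (ε := Cf + 1) (a := 0) (b := T)
    ?_ ?_ (le_of_eq (hfun 0)) ?_
  · intro t ht
    simpa only [hfun, sub_zero] using key t ht
  · exact hu.inner hu
  · intro x hx r hr
    have hD := (hu' x hx).inner ℝ (hu' x hx)
    refine (hD.liminf_right_slope_le hr).mono fun z hz => ?_
    rwa [slope_def_module, smul_eq_mul] at hz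
  · intro x hx
    have h1 := hg x hx
    have h2 : 2 * ‖u x‖ ≤ 1 + ‖u x‖ ^ 2 := by nlinarith [sq_nonneg (‖u x‖ - 1)]
    have h3 := norm_nonneg (u x)
    have h4 := real_inner_comm (u x) (g x)
    have h5 := hfun x
    nlinarith

lemma lipschitz_const_sub {g : V → V} {K : ℝ≥0} (hg : LipschitzWith K g) (c : V) :
    LipschitzWith K (fun x => c - g x) := by
  apply LipschitzWith.of_dist_le_mul
  intro x y
  have h : dist (c - g x) (c - g y) = dist (g x) (g y) := by
    simp only [dist_eq_norm]
    rw [show (c - g x) - (c - g y) = g y - g x by abel, norm_sub_rev]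
  rw [h]; exact hg.dist_le_mul x y

lemma lipschitzOn_const_sub {g : V → V} {K : ℝ≥0} {s : Set V} (hg : LipschitzOnWith K g s)
    (c : V) : LipschitzOnWith K (fun x => c - g x) s := by
  apply LipschitzOnWith.of_dist_le_mul
  intro x hx y hy
  have h : dist (c - g x) (c - g y) = dist (g x) (g y) := by
    simp only [dist_eq_norm]
    rw [show (c - g x) - (c - g y) = g y - g x by abel, norm_sub_rev]
  rw [h]; exact hg.dist_le_mul x hx y hy

lemma deriv_Icc_to_Ici {u : ℝ → V} {d : V} {t b T : ℝ} (ht : t ∈ Ico (0 : ℝ) b) (hbT : b ≤ T)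
    (h : HasDerivWithinAt u d (Icc 0 T) t) : HasDerivWithinAt u d (Ici t) t := by
  refine h.mono_of_mem_nhdsWithin ?_
  refine Filter.mem_of_superset
    (inter_mem_nhdsWithin (Ici t) (Iio_mem_nhds (lt_of_lt_of_le ht.2 hbT))) ?_
  rintro s ⟨hs1, hs2⟩
  exact ⟨le_trans ht.1 hs1, le_of_lt hs2⟩

/-- Existence of a solution of the (untruncated) equation on `[0, T]`. -/
lemma exists_sol_Icc [CompleteSpace V] (B : V →L[ℝ] V)
    (hpos : ∀ v : V, 0 ≤ ⟪B v, v⟫)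
    {f : ℝ → V} (hf_cont : ContinuousOn f (Ici 0))
    {Cf : ℝ} (hCf : 0 ≤ Cf) (hfC : ∀ t ∈ Ici (0 : ℝ), ‖f t‖ ≤ Cf)
    (u₀ : V) {T : ℝ} (hT : 0 < T) :
    ∃ u : ℝ → V, u 0 = u₀ ∧
      ∀ t ∈ Icc (0 : ℝ) T, HasDerivWithinAt u (f t - kirchhoffNL B (u t)) (Icc 0 T) t := by
  set R : ℝ := Real.sqrt (gronwallBound (‖u₀‖ ^ 2) (Cf + 1) (Cf + 1) T) with hRdef
  have hR : 0 ≤ R := Real.sqrt_nonneg _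
  set M : ℝ := (1 + ‖B‖ * R ^ 2) * (‖B‖ * R) with hMdef
  have hM : 0 ≤ M := by positivity
  -- the truncated vector field
  set w : ℝ → V → V := fun t x => f t - kirchhoffNL B (radialProj R x) with hwdef
  have hmaps : ∀ x : V, radialProj R x ∈ closedBall (0 : V) R :=
    fun x => mem_closedBall_zero_iff.2 (radialProj_norm_le hR x)
  have hlipNP : LipschitzWith
      ((Real.toNNReal ((1 + ‖B‖ * R ^ 2) * ‖B‖ + 2 * ‖B‖ ^ 2 * R ^ 2)) * 2)
      (fun x : V => kirchhoffNL B (radialProj R x)) := by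
    rw [← lipschitzOnWith_univ]
    exact (kirchhoffNL_lipschitzOn B hR).comp
      ((radialProj_lipschitz hR).lipschitzOnWith) (fun x _ => hmaps x)
  have hT0 : (0 : ℝ) ∈ Icc (0 : ℝ) T := ⟨le_rfl, hT.le⟩
  have hpl : IsPicardLindelof w (tmin := 0) (tmax := T) ⟨0, hT0⟩ u₀
      (Real.toNNReal ((Cf + M) * T)) 0 (Real.toNNReal (Cf + M))
      ((Real.toNNReal ((1 + ‖B‖ * R ^ 2) * ‖B‖ + 2 * ‖B‖ ^ 2 * R ^ 2)) * 2) := by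
    constructor
    · intro t _
      exact (lipschitz_const_sub hlipNP (f t)).lipschitzOnWith
    · intro x _
      exact (hf_cont.mono (Icc_subset_Ici_self)).sub continuousOn_const
    · intro t ht x _
      have h1 : ‖f t‖ ≤ Cf := hfC t ht.1
      have h2 : ‖kirchhoffNL B (radialProj R x)‖ ≤ M :=
        kirchhoffNL_norm_le B hR (radialProj_norm_le hR x)
      calc ‖w t x‖ ≤ ‖f t‖ + ‖kirchhoffNL B (radialProj R x)‖ := norm_sub_le _ _
        _ ≤ Cf + M := add_le_add h1 h2
        _ ≤ (Real.toNNReal (Cf + M) : ℝ) := Real.le_coe_toNNReal _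
    · simp only [tsub_zero, sub_zero, sub_self]
      rw [max_eq_left hT.le, Real.coe_toNNReal _ (by positivity),
        Real.coe_toNNReal _ (by positivity), NNReal.coe_zero, sub_zero]
  obtain ⟨u, hu0, hu'⟩ := hpl.exists_eq_forall_mem_Icc_hasDerivWithinAt₀
  replace hu0 : u 0 = u₀ := hu0
  -- a priori bound: the solution stays in the ball of radius `R`
  have hucont : ContinuousOn u (Icc 0 T) := fun t ht => (hu' t ht).continuousWithinAt
  have hbd := apriori_bound (u := u) (g := fun t => w t (u t)) hCf hucont
    (fun t ht => deriv_Icc_to_Ici ht le_rfl (hu' t (Ico_subset_Icc_self ht)))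
    (by
      intro t ht
      rw [hwdef]
      dsimp only
      rw [inner_sub_left]
      have h1 : ⟪f t, u t⟫ ≤ Cf * ‖u t‖ := by
        refine le_trans (real_inner_le_norm _ _) ?_
        exact mul_le_mul_of_nonneg_right (hfC t ht.1) (norm_nonneg _)
      have h2 := kirchhoffNL_radialProj_inner_nonneg B hpos hR (u t)
      linarith)
  have hgB0 : 0 ≤ gronwallBound (‖u₀‖ ^ 2) (Cf + 1) (Cf + 1) T :=
    gronwallBound_nonneg (by positivity) (by positivity) hT.le
  have hball : ∀ t ∈ Icc (0 : ℝ) T, ‖u t‖ ≤ R := by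
    intro t ht
    have h1 := hbd t ht
    rw [hu0] at h1
    have h2 : gronwallBound (‖u₀‖ ^ 2) (Cf + 1) (Cf + 1) t
        ≤ gronwallBound (‖u₀‖ ^ 2) (Cf + 1) (Cf + 1) T :=
      gronwallBound_mono_right (by positivity) (by positivity) (by positivity) ht.2
    have h3 : ‖u t‖ ^ 2 ≤ R ^ 2 := by
      rw [hRdef, Real.sq_sqrt hgB0]; linarith
    nlinarith [norm_nonneg (u t), hR]
  refine ⟨u, hu0, fun t ht => ?_⟩
  have h := hu' t ht
  simpa only [hwdef, show radialProj R (u t) = u t from radialProj_eq (hball t ht)] using h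

/-- Uniqueness of solutions of the (untruncated) equation on `[0, b]`. -/
lemma unique_sol_Icc (B : V →L[ℝ] V)
    (hpos : ∀ v : V, 0 ≤ ⟪B v, v⟫)
    {f : ℝ → V} {Cf : ℝ} (hCf : 0 ≤ Cf) (hfC : ∀ t ∈ Ici (0 : ℝ), ‖f t‖ ≤ Cf)
    {b : ℝ} {u v : ℝ → V}
    (hu : ContinuousOn u (Icc 0 b))
    (hu' : ∀ t ∈ Ico (0 : ℝ) b, HasDerivWithinAt u (f t - kirchhoffNL B (u t)) (Ici t) t)
    (hv : ContinuousOn v (Icc 0 b))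
    (hv' : ∀ t ∈ Ico (0 : ℝ) b, HasDerivWithinAt v (f t - kirchhoffNL B (v t)) (Ici t) t)
    (h0 : u 0 = v 0) : EqOn u v (Icc 0 b) := by
  set Rb : ℝ := Real.sqrt (gronwallBound (‖u 0‖ ^ 2) (Cf + 1) (Cf + 1) b) with hRbdef
  have hinner : ∀ (z : ℝ → V), (∀ t ∈ Ico (0 : ℝ) b,
      HasDerivWithinAt z (f t - kirchhoffNL B (z t)) (Ici t) t) →
      ∀ t ∈ Ico (0 : ℝ) b, ⟪f t - kirchhoffNL B (z t), z t⟫ ≤ Cf * ‖z t‖ := by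
    intro z _ t ht
    rw [inner_sub_left]
    have h1 : ⟪f t, z t⟫ ≤ Cf * ‖z t‖ := by
      refine le_trans (real_inner_le_norm _ _) ?_
      exact mul_le_mul_of_nonneg_right (hfC t ht.1) (norm_nonneg _)
    have h2 := kirchhoffNL_inner_nonneg B hpos (z t)
    linarith
  have hmem : ∀ (z : ℝ → V), ContinuousOn z (Icc 0 b) →
      (∀ t ∈ Ico (0 : ℝ) b, HasDerivWithinAt z (f t - kirchhoffNL B (z t)) (Ici t) t) →
      z 0 = u 0 →
      ∀ t ∈ Ico (0 : ℝ) b, z t ∈ closedBall (0 : V) Rb := by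
    intro z hz hz' hz0 t ht
    have hbd := apriori_bound hCf hz hz' (hinner z hz') t (Ico_subset_Icc_self ht)
    rw [hz0] at hbd
    have hb0 : (0 : ℝ) ≤ b := le_trans ht.1 ht.2.le
    have h2 : gronwallBound (‖u 0‖ ^ 2) (Cf + 1) (Cf + 1) t
        ≤ gronwallBound (‖u 0‖ ^ 2) (Cf + 1) (Cf + 1) b :=
      gronwallBound_mono_right (by positivity) (by positivity) (by positivity) ht.2.le
    have hgB0 : 0 ≤ gronwallBound (‖u 0‖ ^ 2) (Cf + 1) (Cf + 1) b :=
      gronwallBound_nonneg (by positivity) (by positivity) hb0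
    rw [mem_closedBall_zero_iff]
    have h3 : ‖z t‖ ^ 2 ≤ Rb ^ 2 := by
      rw [hRbdef, Real.sq_sqrt hgB0]; linarith
    nlinarith [norm_nonneg (z t), Real.sqrt_nonneg (gronwallBound (‖u 0‖ ^ 2) (Cf + 1) (Cf + 1) b)]
  have hRb : 0 ≤ Rb := Real.sqrt_nonneg _
  exact ODE_solution_unique_of_mem_Icc_right
    (v := fun t x => f t - kirchhoffNL B x) (s := fun _ => closedBall (0 : V) Rb)
    (fun t _ => lipschitzOn_const_sub (kirchhoffNL_lipschitzOn B hRb) (f t))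
    hu hu' (hmem u hu hu' rfl) hv hv' (hmem v hv hv' h0.symm) h0

end KirchhoffAux

/-- Existence and uniqueness of a continuously differentiable global solution to the
semidiscrete Kirchhoff equation `u' + (1 + ⟪Au, u⟫) Au = f` on `[0, ∞)`. -/
theorem semidiscrete_global_existence_uniqueness
    {V : Type*} [NormedAddCommGroup V] [InnerProductSpace ℝ V] [FiniteDimensional ℝ V]
    (A : V →ₗ[ℝ] V)
    (hsymm : ∀ v w : V, (inner ℝ (A v) w : ℝ) = inner ℝ v (A w))
    (hpos : ∀ v : V, (0 : ℝ) ≤ inner ℝ (A v) v)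
    (f : ℝ → V) (hf_cont : ContinuousOn f (Ici 0))
    (hf_bdd : ∃ C : ℝ, ∀ t ∈ Ici (0 : ℝ), ‖f t‖ ≤ C)
    (u₀ : V) :
    ∃ u u' : ℝ → V,
      u 0 = u₀ ∧
      ContinuousOn u' (Ici 0) ∧
      (∀ t ∈ Ici (0 : ℝ), HasDerivWithinAt u (u' t) (Ici 0) t) ∧
      (∀ t ∈ Ici (0 : ℝ), u' t + (1 + (inner ℝ (A (u t)) (u t) : ℝ)) • A (u t) = f t) ∧
      (∀ v v' : ℝ → V,
        v 0 = u₀ →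
        ContinuousOn v' (Ici 0) →
        (∀ t ∈ Ici (0 : ℝ), HasDerivWithinAt v (v' t) (Ici 0) t) →
        (∀ t ∈ Ici (0 : ℝ), v' t + (1 + (inner ℝ (A (v t)) (v t) : ℝ)) • A (v t) = f t) →
        ∀ t ∈ Ici (0 : ℝ), v t = u t) := by
  classical
  obtain ⟨C, hC⟩ := hf_bdd
  set Cf : ℝ := max C 0 with hCfdef
  have hCf : (0 : ℝ) ≤ Cf := le_max_right _ _
  have hfC : ∀ t ∈ Ici (0 : ℝ), ‖f t‖ ≤ Cf := fun t ht => (hC t ht).trans (le_max_left _ _)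
  set B : V →L[ℝ] V := LinearMap.toContinuousLinearMap A with hBdef
  have hBA : ∀ x : V, B x = A x := fun x => rfl
  have hposB : ∀ x : V, (0 : ℝ) ≤ inner ℝ (B x) x := fun x => by rw [hBA]; exact hpos x
  have hNL : ∀ x : V, kirchhoffNL B x = (1 + (inner ℝ (A x) x : ℝ)) • A x := by
    intro x; unfold kirchhoffNL; simp only [hBA]
  -- solutions on each interval [0, n+1]
  have hex : ∀ n : ℕ, ∃ u : ℝ → V, u 0 = u₀ ∧
      ∀ t ∈ Icc (0 : ℝ) ((n : ℝ) + 1),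
        HasDerivWithinAt u (f t - kirchhoffNL B (u t)) (Icc 0 ((n : ℝ) + 1)) t :=
    fun n => exists_sol_Icc B hposB hf_cont hCf hfC u₀ (by positivity)
  choose sol hsol0 hsol' using hex
  have hcontn : ∀ (n : ℕ) {b : ℝ}, b ≤ (n : ℝ) + 1 → ContinuousOn (sol n) (Icc 0 b) := by
    intro n b hb
    have h : ContinuousOn (sol n) (Icc 0 ((n : ℝ) + 1)) :=
      fun t ht => (hsol' n t ht).continuousWithinAt
    exact h.mono (Icc_subset_Icc le_rfl hb)
  have hIci : ∀ (n : ℕ) {b : ℝ}, b ≤ (n : ℝ) + 1 → ∀ t ∈ Ico (0 : ℝ) b,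
      HasDerivWithinAt (sol n) (f t - kirchhoffNL B (sol n t)) (Ici t) t := by
    intro n b hb t ht
    exact deriv_Icc_to_Ici ht hb (hsol' n t ⟨ht.1, le_trans ht.2.le hb⟩)
  -- consistency of the solutions
  have hcons : ∀ (m n : ℕ) (t : ℝ), 0 ≤ t → t ≤ (m : ℝ) + 1 → t ≤ (n : ℝ) + 1 →
      sol m t = sol n t := by
    intro m n t ht htm htn
    have h := unique_sol_Icc (b := min ((m : ℝ) + 1) ((n : ℝ) + 1)) B hposB hCf hfC
      (hcontn m (min_le_left _ _)) (hIci m (min_le_left _ _))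
      (hcontn n (min_le_right _ _)) (hIci n (min_le_right _ _))
      (by rw [hsol0 m, hsol0 n])
    exact h ⟨ht, le_min htm htn⟩
  -- the global solution
  set u : ℝ → V := fun t => sol ⌈t⌉₊ t with hudef
  set u' : ℝ → V := fun t => f t - kirchhoffNL B (u t) with hu'def
  have hagree : ∀ (n : ℕ) (t : ℝ), 0 ≤ t → t ≤ (n : ℝ) + 1 → u t = sol n t := by
    intro n t ht htn
    have h1 : t ≤ (⌈t⌉₊ : ℝ) := Nat.le_ceil t
    exact hcons _ n t ht (by linarith) htn
  have hu0 : u 0 = u₀ := by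
    have h := hagree 0 0 le_rfl (by norm_num)
    rw [h, hsol0]
  have hderiv : ∀ t ∈ Ici (0 : ℝ), HasDerivWithinAt u (u' t) (Ici 0) t := by
    intro t ht
    have h1 : t ≤ (⌈t⌉₊ : ℝ) := Nat.le_ceil t
    have htn : t ∈ Icc (0 : ℝ) ((⌈t⌉₊ : ℝ) + 1) := ⟨ht, by linarith⟩
    have hD := hsol' ⌈t⌉₊ t htn
    have hut : u t = sol ⌈t⌉₊ t := hagree ⌈t⌉₊ t ht (by linarith)
    have hDu : HasDerivWithinAt u (f t - kirchhoffNL B (sol ⌈t⌉₊ t))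
        (Icc 0 ((⌈t⌉₊ : ℝ) + 1)) t :=
      hD.congr (fun s hs => hagree ⌈t⌉₊ s hs.1 hs.2) hut
    rw [← hut] at hDu
    have hval : u' t = f t - kirchhoffNL B (u t) := by rw [hu'def]
    rw [hval]
    refine hDu.mono_of_mem_nhdsWithin ?_
    refine Filter.mem_of_superset
      (inter_mem_nhdsWithin (Ici 0) (Iio_mem_nhds (by linarith : t < (⌈t⌉₊ : ℝ) + 1))) ?_
    rintro s ⟨hs1, hs2⟩
    exact ⟨hs1, hs2.le⟩
  have hucont : ContinuousOn u (Ici 0) := fun t ht => (hderiv t ht).continuousWithinAt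
  have hNcont : Continuous (kirchhoffNL B) := by
    unfold kirchhoffNL
    exact (continuous_const.add (B.continuous.inner continuous_id)).smul B.continuous
  have hu'cont : ContinuousOn u' (Ici 0) := by
    have h : ContinuousOn (fun t => f t - kirchhoffNL B (u t)) (Ici 0) :=
      hf_cont.sub (hNcont.comp_continuousOn hucont)
    exact hu'def ▸ h
  have heq : ∀ t ∈ Ici (0 : ℝ), u' t + (1 + (inner ℝ (A (u t)) (u t) : ℝ)) • A (u t) = f t := by
    intro t ht
    have hval : u' t = f t - kirchhoffNL B (u t) := by rw [hu'def]
    rw [hval, ← hNL (u t)]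
    abel
  refine ⟨u, u', hu0, hu'cont, hderiv, heq, ?_⟩
  intro v v' hv0 hv'cont hvd hveq t ht
  have h1 : t ≤ (⌈t⌉₊ : ℝ) := Nat.le_ceil t
  set b : ℝ := (⌈t⌉₊ : ℝ) + 1 with hbdef
  have hvd' : ∀ s ∈ Ico (0 : ℝ) b, HasDerivWithinAt v (f s - kirchhoffNL B (v s)) (Ici s) s := by
    intro s hs
    have h := (hvd s hs.1).mono (Ici_subset_Ici.2 hs.1)
    have heqv : v' s = f s - kirchhoffNL B (v s) := by
      have h2 := hveq s hs.1
      rw [← hNL (v s)] at h2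
      exact eq_sub_of_add_eq h2
    rwa [heqv] at h
  have hud' : ∀ s ∈ Ico (0 : ℝ) b, HasDerivWithinAt u (f s - kirchhoffNL B (u s)) (Ici s) s := by
    intro s hs
    have h := (hderiv s hs.1).mono (Ici_subset_Ici.2 hs.1)
    have hval : u' s = f s - kirchhoffNL B (u s) := by rw [hu'def]
    rwa [hval] at h
  have hvcont0 : ContinuousOn v (Ici 0) := fun s hs => (hvd s hs).continuousWithinAt
  have hvcont : ContinuousOn v (Icc 0 b) := hvcont0.mono Icc_subset_Ici_self
  have hucontb : ContinuousOn u (Icc 0 b) := hucont.mono Icc_subset_Ici_self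
  have huniq := unique_sol_Icc B hposB hCf hfC hvcont hvd' hucontb hud' (by rw [hv0, hu0])
  exact huniq ⟨ht, by linarith⟩
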